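/- The isomorphism μ: M_u → H_u X_∅ restricts to an isomorphism of left H_{A_{±1},u}-modules from M_{A_{±1},u} onto H_{A_{±1},u} X_∅. -/

import Mathlib

set_option synthInstance.maxHeartbeats 1000000
set_option maxHeartbeats 2000000

open scoped Classical TensorProduct

noncomputable section

namespace IUIM

/-- The field `ℚ(u)` of rational functions; `u` is `RatFunc.X`. -/
abbrev Fq : Type := RatFunc ℚ

/-- The Laurent polynomial subring `ℤ[u, u⁻¹]` of `ℚ(u)`. -/
def Ar : Subring Fq := Subring.closure {RatFunc.X, (RatFunc.X)⁻¹}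

/-- The subring `A₋₁ = ℤ[u, u⁻¹, (u+1)⁻¹]` of `ℚ(u)`. -/
def Am1 : Subring Fq := Subring.closure {RatFunc.X, (RatFunc.X)⁻¹, (RatFunc.X + 1)⁻¹}

/-- The subring `A±₁ = ℤ[u, u⁻¹, (u+1)⁻¹, (u-1)⁻¹]` of `ℚ(u)`. -/
def Apm : Subring Fq :=
  Subring.closure {RatFunc.X, (RatFunc.X)⁻¹, (RatFunc.X + 1)⁻¹, (RatFunc.X - 1)⁻¹}

lemma X_mem_Am1 : (RatFunc.X : Fq) ∈ Am1 := Subring.subset_closure (by simp)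
lemma X_mem_Apm : (RatFunc.X : Fq) ∈ Apm := Subring.subset_closure (by simp)

/-- `u` as an element of `A±₁`. -/
def uApm : ↥Apm := ⟨RatFunc.X, X_mem_Apm⟩
/-- `u` as an element of `A₋₁`. -/
def uAm1 : ↥Am1 := ⟨RatFunc.X, X_mem_Am1⟩

variable {B W : Type*} [Group W] {M : CoxeterMatrix B} (cs : CoxeterSystem M W) (star : W ≃* W)

/-- The Bruhat order on `W`, via the subword property: `x ≤ w` iff some reduced word
for `w` contains a reduced word for `x` as a subword. -/
def BruhatLE (x w : W) : Prop :=
  ∃ ω : List B, cs.IsReduced ω ∧ cs.wordProd ω = w ∧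
    ∃ ω' : List B, ω'.Sublist ω ∧ cs.IsReduced ω' ∧ cs.wordProd ω' = x

/-- The strict Bruhat order. -/
def BruhatLT (x w : W) : Prop := BruhatLE cs x w ∧ x ≠ w

/-- The twisted product `s ⋉ w`: it is `s*w` if `s*w = w*s^*`, and `s*w*s^*` otherwise. -/
def twMul (i : B) (w : W) : W :=
  if cs.simple i * w = w * star (cs.simple i) then cs.simple i * w
  else cs.simple i * w * star (cs.simple i)

/-- `twProd [i₁,...,iₖ] = sᵢ₁ ⋉ (sᵢ₂ ⋉ ( ⋯ ⋉ (sᵢₖ ⋉ 1)))`. -/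
def twProd (ω : List B) : W := ω.foldr (twMul cs star) 1

/-- The minimal length of an `I⋆`-expression for `w` (the rank function `ρ`). -/
def rho (w : W) : ℕ := sInf {k | ∃ ω : List B, ω.length = k ∧ twProd cs star ω = w}

/-- `ω` is a reduced `I⋆`-expression for `w`: its twisted product is `w` and it has
minimal length among all such expressions. -/
def IsRedI (ω : List B) (w : W) : Prop :=
  twProd cs star ω = w ∧ ∀ ω' : List B, twProd cs star ω' = w → ω.length ≤ ω'.length

/-- The statistic `ℓ^*` computed from a word `(i₁, …, i_k)`: the number of indices `t`
such that `s_{i_t} w_t = w_t (s_{i_t})^*`, where `w_t = s_{i_t} ⋉ ⋯ ⋉ s_{i_1} ⋉ w` is the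
corresponding tail twisted product `s_{i_{t+1}} ⋉ ⋯ ⋉ s_{i_k} ⋉ 1`. -/
def lstarWord : List B → ℕ
  | [] => 0
  | i :: ω =>
      (if cs.simple i * twProd cs star ω = twProd cs star ω * star (cs.simple i) then 1 else 0)
        + lstarWord ω

lemma twMul_mem (hst : ∀ v, star (star v) = v) (i : B) {w : W} (hw : star w = w⁻¹) :
    star (twMul cs star i w) = (twMul cs star i w)⁻¹ := by
  unfold twMul
  split_ifs with h
  · have h2 : star (cs.simple i) = w⁻¹ * (cs.simple i * w) := by rw [h]; group
    rw [map_mul, hw, h2, mul_inv_rev, cs.inv_simple i]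
    group
  · have hs : star (cs.simple i) * star (cs.simple i) = 1 := by
      rw [← map_mul, cs.simple_mul_simple_self, map_one]
    have hsinv : (star (cs.simple i))⁻¹ = star (cs.simple i) := by
      exact (eq_inv_of_mul_eq_one_left hs).symm
    rw [map_mul, map_mul, hw, hst, mul_inv_rev, mul_inv_rev, hsinv, cs.inv_simple i]
    group

/-- `s ⋉ w` as a twisted involution. -/
def twK (hst : ∀ v, star (star v) = v) (i : B) (z : {w : W // star w = w⁻¹}) :
    {w : W // star w = w⁻¹} :=
  ⟨twMul cs star i z.1, twMul_mem cs star hst i z.2⟩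

/-- The identity element as a twisted involution. -/
def oneI : {w : W // star w = w⁻¹} := ⟨1, by simp⟩

/-- `T` is the standard basis of an Iwahori–Hecke algebra with Hecke parameter `u ^ 2`
(over a ground ring `R`, with `u ∈ R`): `T_w T_{w'} = T_{w w'}` whenever lengths add, and
`(T_s + 1)(T_s - u²) = 0` for all simple reflections `s`. -/
def IsHecke {R H : Type*} [CommRing R] [Ring H] [Algebra R H] (u : R) (T : Module.Basis W R H) :
    Prop :=
  T 1 = 1 ∧
  (∀ x y : W, cs.length (x * y) = cs.length x + cs.length y → T x * T y = T (x * y)) ∧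
  (∀ i : B, (T (cs.simple i) + 1) * (T (cs.simple i) - algebraMap R H (u ^ 2)) = 0)

/-- The Lusztig–Vogan rules for the `u`-deformed involution module: the requirements on
the action `act` of the standard basis elements `T_s` on the basis vectors `e z = a_z`
indexed by the twisted involutions. -/
def LVRules {R Mu : Type*} [CommRing R] [AddCommGroup Mu] [Module R Mu]
    (hst : ∀ v, star (star v) = v) (u : R)
    (e : {w : W // star w = w⁻¹} → Mu) (act : W → Mu → Mu) : Prop :=
  ∀ (i : B) (z : {w : W // star w = w⁻¹}),
    (cs.simple i * z.1 = z.1 * star (cs.simple i) →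
        BruhatLT cs z.1 (cs.simple i * z.1) →
      act (cs.simple i) (e z) = u • e z + (u + 1) • e (twK cs star hst i z)) ∧
    (cs.simple i * z.1 = z.1 * star (cs.simple i) →
        BruhatLT cs (cs.simple i * z.1) z.1 →
      act (cs.simple i) (e z) =
        (u ^ 2 - u - 1) • e z + (u ^ 2 - u) • e (twK cs star hst i z)) ∧
    (cs.simple i * z.1 ≠ z.1 * star (cs.simple i) →
        BruhatLT cs z.1 (cs.simple i * z.1) →
      act (cs.simple i) (e z) = e (twK cs star hst i z)) ∧
    (cs.simple i * z.1 ≠ z.1 * star (cs.simple i) →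
        BruhatLT cs (cs.simple i * z.1) z.1 →
      act (cs.simple i) (e z) = (u ^ 2 - 1) • e z + u ^ 2 • e (twK cs star hst i z))

/-- The action of the Hecke algebra on the space `Hh` of all formal (possibly infinite)
sums `∑ c_x T_x`, described in coordinates: the `x`-coordinate of `h • ξ` is
`∑ᶠ y, ξ_y ⬝ (coefficient of T_x in h ⬝ T_y)`. -/
def IsHatAction {R H : Type*} [CommRing R] [Ring H] [Algebra R H] (T : Module.Basis W R H)
    {Hh : Type*} [AddCommGroup Hh] [Module R Hh] [Module H Hh]
    (coords : Hh ≃ₗ[R] (W → R)) : Prop :=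
  ∀ (h : H) (ξ : Hh) (x : W), coords (h • ξ) x = ∑ᶠ y : W, coords ξ y * (T.repr (h * T y) x)

/-- The `R`-span (for a subring `R ⊆ ℚ(u)`) of a family of vectors in a `ℚ(u)`-vector
space; used for the various integral forms. -/
def MA {ι V : Type*} [AddCommGroup V] [Module Fq V] (R : Subring Fq) (v : ι → V) :
    Submodule (↥R) V :=
  Submodule.span (↥R) (Set.range v)

/-- The canonical element `1 ⊗ v z` of the base change `K ⊗_R (R-span of v)`. -/
def bce {ι V : Type*} [AddCommGroup V] [Module Fq V] (R : Subring Fq) (K : Type*)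
    [CommRing K] [Algebra (↥R) K] (v : ι → V) (z : ι) :
    TensorProduct (↥R) K ↥(MA R v) :=
  (1 : K) ⊗ₜ[↥R] (⟨v z, Submodule.subset_span (Set.mem_range_self z)⟩ : ↥(MA R v))

/-- Right multiplication/action on a fixed element `Ξ` (e.g. `X_∅`), as a
`ℚ(u)`-linear map `h ↦ h • Ξ`. -/
def smulXeF {H V : Type*} [Ring H] [Algebra Fq H] [AddCommGroup V] [Module Fq V]
    [Module H V] [IsScalarTower Fq H V] (Ξ : V) : H →ₗ[Fq] V where
  toFun h := h • Ξ
  map_add' h h' := add_smul h h' Ξ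
  map_smul' c h := by simp [smul_assoc]

/-- The integral form `H_{R,u} X_∅`: the image of the `R`-span of the `T_w` under
`h ↦ h • Ξ`. -/
def NX {ι H V : Type*} [Ring H] [Algebra Fq H] [AddCommGroup V] [Module Fq V]
    [Module H V] [IsScalarTower Fq H V] (R : Subring Fq) (Tv : ι → H) (Ξ : V) :
    Submodule (↥R) V :=
  Submodule.map ((smulXeF Ξ).restrictScalars (↥R)) (Submodule.span (↥R) (Set.range Tv))


lemma star_wordProd (f : B → B) (hf : ∀ i, star (cs.simple i) = cs.simple (f i)) :
    ∀ ω : List B, star (cs.wordProd ω) = cs.wordProd (ω.map f) := by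
  intro ω
  induction ω with
  | nil => simp
  | cons i ω ih => rw [cs.wordProd_cons, map_mul, hf, ih, List.map_cons, cs.wordProd_cons]

lemma star_length (hst : ∀ v : W, star (star v) = v)
    (hS : ∀ i : B, ∃ j : B, star (cs.simple i) = cs.simple j) (w : W) :
    cs.length (star w) = cs.length w := by
  choose f hf using hS
  have key : ∀ v : W, cs.length (star v) ≤ cs.length v := by
    intro v
    obtain ⟨ω, hl, hp⟩ := cs.exists_reduced_word v
    calc cs.length (star v) = cs.length (cs.wordProd (ω.map f)) := by
          rw [hp, star_wordProd cs star f hf]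
    _ ≤ (ω.map f).length := cs.length_wordProd_le _
    _ = cs.length v := by rw [List.length_map, hp, hl.eq]
  refine le_antisymm (key w) ?_
  calc cs.length w = cs.length (star (star w)) := by rw [hst]
  _ ≤ cs.length (star w) := key _

lemma bruhat_lt_of_succ (i : B) (x : W)
    (h : cs.length (cs.simple i * x) = cs.length x + 1) :
    BruhatLT cs x (cs.simple i * x) := by
  obtain ⟨ω, hl, hp⟩ := cs.exists_reduced_word x
  refine ⟨⟨i :: ω, ?_, ?_, ω, List.sublist_cons_self i ω, ?_, hp.symm⟩, ?_⟩
  · show cs.length (cs.wordProd (i :: ω)) = (i :: ω).length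
    rw [cs.wordProd_cons, ← hp, h, List.length_cons, hp, hl.eq]
  · rw [cs.wordProd_cons, ← hp]
  · show cs.length (cs.wordProd ω) = ω.length
    rw [← hp, hp, hl.eq]
  · intro e
    rw [← e] at h
    omega

lemma blt_down (i : B) (w : W) (h : cs.length (cs.simple i * w) + 1 = cs.length w) :
    BruhatLT cs (cs.simple i * w) w := by
  have h2 : cs.length (cs.simple i * (cs.simple i * w)) = cs.length (cs.simple i * w) + 1 := by
    rw [cs.simple_mul_simple_cancel_left i]; omega
  have h3 := bruhat_lt_of_succ cs i (cs.simple i * w) h2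
  rwa [cs.simple_mul_simple_cancel_left i] at h3

lemma X4_ne_X2 : (RatFunc.X : Fq) ^ 4 - RatFunc.X ^ 2 ≠ 0 := by
  intro h
  rw [sub_eq_zero] at h
  have h2 : (Polynomial.X : Polynomial ℚ) ^ 4 = Polynomial.X ^ 2 :=
    RatFunc.algebraMap_injective ℚ (by simpa [map_pow, RatFunc.algebraMap_X] using h)
  have := congrArg Polynomial.natDegree h2
  simp at this

lemma Xp1_ne_zero : (RatFunc.X + 1 : Fq) ≠ 0 := by
  intro h
  have h2 : (Polynomial.X + 1 : Polynomial ℚ) = 0 :=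
    RatFunc.algebraMap_injective ℚ (by simpa [map_add, RatFunc.algebraMap_X] using h)
  have h3 : (Polynomial.X + 1 : Polynomial ℚ).natDegree = 1 := by
    simpa using Polynomial.natDegree_X_add_C (1 : ℚ)
  rw [h2] at h3
  simp at h3

lemma Xp1inv_mem_Apm : ((RatFunc.X + 1 : Fq))⁻¹ ∈ Apm := Subring.subset_closure (by simp)

theorem statement2
    {B W : Type*} [Group W] {M : CoxeterMatrix B} (cs : CoxeterSystem M W)
    (star : W ≃* W) (hst : ∀ v : W, star (star v) = v)
    (hS : ∀ i : B, ∃ j : B, star (cs.simple i) = cs.simple j)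
    (H : Type*) [Ring H] [Algebra Fq H] (T : Module.Basis W Fq H)
    (hH : IsHecke cs (RatFunc.X : Fq) T)
    (Mu : Type*) [AddCommGroup Mu] [Module Fq Mu] [Module H Mu] [IsScalarTower Fq H Mu]
    (aB : Module.Basis {w : W // star w = w⁻¹} Fq Mu)
    (hMu : LVRules cs star hst (RatFunc.X : Fq) (⇑aB) (fun w m => T w • m))
    (Hh : Type*) [AddCommGroup Hh] [Module Fq Hh] [Module H Hh] [IsScalarTower Fq H Hh]
    (coords : Hh ≃ₗ[Fq] (W → Fq)) (hHh : IsHatAction T coords)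
    (Xe : Hh)
    (hXe : ∀ x : W, coords Xe x =
      if star x = x then (RatFunc.X : Fq) ^ (-(cs.length x : ℤ)) else 0)
    (μ : Mu →ₗ[H] Hh) (hμone : μ (aB (oneI star)) = Xe)
    (hμinj : Function.Injective μ)
    (hμrange : LinearMap.range μ = Submodule.span H {Xe}) :
    Set.InjOn ⇑μ (Submodule.span (↥Apm) (Set.range ⇑aB) : Set Mu) ∧
    ⇑μ '' (Submodule.span (↥Apm) (Set.range ⇑aB) : Set Mu) =
      {ξ : Hh | ∃ h ∈ Submodule.span (↥Apm) (Set.range ⇑T), ξ = h • Xe} := by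
  classical
  -- abbreviations
  set u : Fq := RatFunc.X with hu
  set S : Submodule (↥Apm) H := Submodule.span (↥Apm) (Set.range ⇑T) with hSdef
  set SM : Submodule (↥Apm) Mu := Submodule.span (↥Apm) (Set.range ⇑aB) with hSMdef
  -- basic scalar lemmas
  have memS_smul : ∀ (c : Fq), c ∈ Apm → ∀ x : H, x ∈ S → c • x ∈ S :=
    fun c hc x hx => S.smul_mem ⟨c, hc⟩ hx
  have memSM_smul : ∀ (c : Fq), c ∈ Apm → ∀ x : Mu, x ∈ SM → c • x ∈ SM :=
    fun c hc x hx => SM.smul_mem ⟨c, hc⟩ hx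
  have hcommMu : ∀ (hh : H) (c : Fq) (m : Mu), hh • (c • m) = c • (hh • m) := by
    intro hh c m
    rw [← algebraMap_smul H c m, ← mul_smul, ← Algebra.commutes, mul_smul, algebraMap_smul]
  have hμFq : ∀ (c : Fq) (m : Mu), μ (c • m) = c • (μ m) := by
    intro c m
    rw [← algebraMap_smul H c m, map_smul, algebraMap_smul]
  -- quadratic relation
  have hquad : ∀ i : B, T (cs.simple i) * T (cs.simple i)
      = (u ^ 2 : Fq) • T (cs.simple i) - T (cs.simple i) + (u ^ 2 : Fq) • (1 : H) := by
    intro i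
    set c : H := algebraMap Fq H (u ^ 2) with hc
    have h0 := hH.2.2 i
    rw [← hc] at h0
    have hid : T (cs.simple i) * T (cs.simple i) - (T (cs.simple i) * c - T (cs.simple i) + c)
        = (T (cs.simple i) + 1) * (T (cs.simple i) - c) := by noncomm_ring
    have h1 : T (cs.simple i) * T (cs.simple i) = T (cs.simple i) * c - T (cs.simple i) + c := by
      have h2 : T (cs.simple i) * T (cs.simple i)
          - (T (cs.simple i) * c - T (cs.simple i) + c) = 0 := by rw [hid, h0]
      exact sub_eq_zero.mp h2
    rw [h1, hc, ← Algebra.commutes, ← Algebra.smul_def, Algebra.algebraMap_eq_smul_one]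
  have hquadm : ∀ (i : B) (m : Mu), T (cs.simple i) • (T (cs.simple i) • m)
      = (u ^ 2 : Fq) • (T (cs.simple i) • m) - T (cs.simple i) • m + (u ^ 2 : Fq) • m := by
    intro i m
    rw [← mul_smul, hquad i, add_smul, sub_smul, smul_assoc, smul_assoc, one_smul]
  -- Hecke multiplication keeps the Apm-span
  have hTsT : ∀ (i : B) (w : W), T (cs.simple i) * T w ∈ S := by
    intro i w
    rcases cs.length_simple_mul w i with h | h
    · rw [hH.2.1 (cs.simple i) w (by rw [cs.length_simple]; omega)]
      exact Submodule.subset_span ⟨_, rfl⟩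
    · have hsw : cs.simple i * (cs.simple i * w) = w := cs.simple_mul_simple_cancel_left i
      have h1 : T (cs.simple i) * T (cs.simple i * w) = T w := by
        rw [hH.2.1 (cs.simple i) (cs.simple i * w) (by rw [cs.length_simple, hsw]; omega), hsw]
      have h2 : T (cs.simple i) * T w
          = (u ^ 2 : Fq) • T w - T w + (u ^ 2 : Fq) • T (cs.simple i * w) := by
        calc T (cs.simple i) * T w
            = (T (cs.simple i) * T (cs.simple i)) * T (cs.simple i * w) := by
              rw [mul_assoc, h1]
          _ = (u ^ 2 : Fq) • (T (cs.simple i) * T (cs.simple i * w))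
              - T (cs.simple i) * T (cs.simple i * w)
              + (u ^ 2 : Fq) • T (cs.simple i * w) := by
              rw [hquad i, add_mul, sub_mul, smul_mul_assoc, smul_mul_assoc, one_mul]
          _ = (u ^ 2 : Fq) • T w - T w + (u ^ 2 : Fq) • T (cs.simple i * w) := by rw [h1]
      rw [h2]
      have hX2 : (u ^ 2 : Fq) ∈ Apm := pow_mem X_mem_Apm 2
      exact add_mem (sub_mem (memS_smul _ hX2 _ (Submodule.subset_span ⟨_, rfl⟩))
        (Submodule.subset_span ⟨_, rfl⟩)) (memS_smul _ hX2 _ (Submodule.subset_span ⟨_, rfl⟩))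
  have hTsS : ∀ (i : B), ∀ x : H, x ∈ S → T (cs.simple i) * x ∈ S := by
    intro i x hx
    induction hx using Submodule.span_induction with
    | mem y hy => obtain ⟨w, rfl⟩ := hy; exact hTsT i w
    | zero => rw [mul_zero]; exact zero_mem S
    | add y z _ _ hy hz => rw [mul_add]; exact add_mem hy hz
    | smul c y _ hy =>
      have : T (cs.simple i) * (c • y) = (c : Fq) • (T (cs.simple i) * y) := mul_smul_comm _ _ _
      rw [this]
      exact memS_smul _ c.2 _ hy
  -- the LV action keeps the Apm-span of the a_z
  have hTz : ∀ (i : B) (z : {w : W // star w = w⁻¹}), T (cs.simple i) • (aB z) ∈ SM := by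
    intro i z
    have hmem1 : aB z ∈ SM := Submodule.subset_span ⟨z, rfl⟩
    have hmem2 : aB (twK cs star hst i z) ∈ SM := Submodule.subset_span ⟨_, rfl⟩
    have hXm : u ∈ Apm := X_mem_Apm
    have h1 : (1 : Fq) ∈ Apm := one_mem _
    by_cases hc : cs.simple i * z.1 = z.1 * star (cs.simple i)
    · rcases cs.length_simple_mul z.1 i with h | h
      · have hr := (hMu i z).1 hc (bruhat_lt_of_succ cs i z.1 h)
        dsimp only at hr
        rw [hr]
        exact add_mem (memSM_smul _ hXm _ hmem1) (memSM_smul _ (add_mem hXm h1) _ hmem2)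
      · have hr := (hMu i z).2.1 hc (blt_down cs i z.1 h)
        dsimp only at hr
        rw [hr]
        exact add_mem (memSM_smul _ (sub_mem (sub_mem (pow_mem hXm 2) hXm) h1) _ hmem1)
          (memSM_smul _ (sub_mem (pow_mem hXm 2) hXm) _ hmem2)
    · rcases cs.length_simple_mul z.1 i with h | h
      · have hr := (hMu i z).2.2.1 hc (bruhat_lt_of_succ cs i z.1 h)
        dsimp only at hr
        rw [hr]
        exact hmem2
      · have hr := (hMu i z).2.2.2 hc (blt_down cs i z.1 h)
        dsimp only at hr
        rw [hr]
        exact add_mem (memSM_smul _ (sub_mem (pow_mem hXm 2) h1) _ hmem1)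
          (memSM_smul _ (pow_mem hXm 2) _ hmem2)
  have hTsSM : ∀ (i : B), ∀ x : Mu, x ∈ SM → T (cs.simple i) • x ∈ SM := by
    intro i x hx
    induction hx using Submodule.span_induction with
    | mem y hy => obtain ⟨z, rfl⟩ := hy; exact hTz i z
    | zero => rw [smul_zero]; exact zero_mem SM
    | add y z _ _ hy hz => rw [smul_add]; exact add_mem hy hz
    | smul c y _ hy =>
      have : T (cs.simple i) • ((c : ↥Apm) • y) = (c : Fq) • (T (cs.simple i) • y) :=
        hcommMu _ _ _
      rw [this]
      exact memSM_smul _ c.2 _ hy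
  -- forward: each μ (a_z) lies in H_{Apm} • Xe
  have hfwd : ∀ (n : ℕ) (z : {w : W // star w = w⁻¹}), cs.length z.1 = n →
      ∃ h ∈ S, μ (aB z) = h • Xe := by
    intro n
    induction n using Nat.strong_induction_on with
    | _ n ih =>
      intro z hz
      by_cases h1 : z.1 = 1
      · refine ⟨T 1, Submodule.subset_span ⟨1, rfl⟩, ?_⟩
        have : z = oneI star := Subtype.ext h1
        rw [this, hμone, hH.1, one_smul]
      · obtain ⟨i, hi⟩ := cs.exists_leftDescent_of_ne_one h1
        have hd : cs.length (cs.simple i * z.1) + 1 = cs.length z.1 := cs.isLeftDescent_iff.mp hi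
        set z' := twK cs star hst i z with hz'
        by_cases hc : cs.simple i * z.1 = z.1 * star (cs.simple i)
        · -- z' = s * z
          have hz'1 : z'.1 = cs.simple i * z.1 := by
            show twMul cs star i z.1 = cs.simple i * z.1
            unfold twMul
            rw [if_pos hc]
          have hcz' : cs.simple i * z'.1 = z'.1 * star (cs.simple i) := by
            rw [hz'1, cs.simple_mul_simple_cancel_left, mul_assoc, ← hc,
              cs.simple_mul_simple_cancel_left i]
          have hlz'1 : cs.length z'.1 + 1 = cs.length z.1 := by
            rw [hz'1]
            exact hd
          have hlen : cs.length (cs.simple i * z'.1) = cs.length z'.1 + 1 := by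
            rw [hz'1, cs.simple_mul_simple_cancel_left i]
            omega
          obtain ⟨h', hS', he'⟩ := ih (cs.length z'.1) (by omega) z' rfl
          have htw : twK cs star hst i z' = z := by
            apply Subtype.ext
            show twMul cs star i z'.1 = z.1
            unfold twMul
            rw [if_pos hcz', hz'1, cs.simple_mul_simple_cancel_left i]
          have hr := (hMu i z').1 hcz' (bruhat_lt_of_succ cs i z'.1 hlen)
          dsimp only at hr
          rw [htw] at hr
          have haz : aB z = ((u + 1)⁻¹ : Fq) • (T (cs.simple i) • aB z' - u • aB z') := by
            rw [hr, add_sub_cancel_left, smul_smul, inv_mul_cancel₀ Xp1_ne_zero, one_smul]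
          refine ⟨((u + 1)⁻¹ : Fq) • (T (cs.simple i) * h' - u • h'),
            memS_smul _ Xp1inv_mem_Apm _
              (sub_mem (hTsS i h' hS') (memS_smul _ X_mem_Apm _ hS')), ?_⟩
          rw [haz, hμFq, map_sub, map_smul, hμFq, he', ← mul_smul, ← smul_assoc u h' Xe,
            ← sub_smul, ← smul_assoc]
        · -- z' = s * z * s⋆
          have hz'1 : z'.1 = cs.simple i * z.1 * star (cs.simple i) := by
            show twMul cs star i z.1 = cs.simple i * z.1 * star (cs.simple i)
            unfold twMul
            rw [if_neg hc]
          have hss : star (cs.simple i) * star (cs.simple i) = 1 := by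
            rw [← map_mul, cs.simple_mul_simple_self, map_one]
          have hsz' : cs.simple i * z'.1 = z.1 * star (cs.simple i) := by
            calc cs.simple i * z'.1
                = cs.simple i * (cs.simple i * (z.1 * star (cs.simple i))) := by
                  rw [hz'1, mul_assoc]
              _ = z.1 * star (cs.simple i) := cs.simple_mul_simple_cancel_left i
          have hz's : z'.1 * star (cs.simple i) = cs.simple i * z.1 := by
            rw [hz'1, mul_assoc, hss, mul_one]
          have hnz' : cs.simple i * z'.1 ≠ z'.1 * star (cs.simple i) := by
            rw [hsz', hz's]
            exact fun e => hc e.symm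
          have htw2 : twK cs star hst i z' = z := by
            apply Subtype.ext
            show twMul cs star i z'.1 = z.1
            unfold twMul
            rw [if_neg hnz', hsz', mul_assoc, hss, mul_one]
          have hlzs : cs.length (z.1 * star (cs.simple i)) = cs.length (cs.simple i * z.1) := by
            have e1 : (z.1 * star (cs.simple i))⁻¹ = star (cs.simple i * z.1) := by
              rw [mul_inv_rev, ← map_inv, cs.inv_simple, map_mul]
              congr 1
              exact z.2.symm
            rw [← cs.length_inv, e1, star_length cs star hst hS]
          obtain ⟨j, hj⟩ := hS i
          have hl2 := cs.length_mul_simple (cs.simple i * z.1) j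
          rw [← hj, ← hz'1] at hl2
          rcases hl2 with hup | hdn
          · -- impossible case: ℓ(s z s⋆) = ℓ(z); derive a contradiction
            exfalso
            have hr1 := (hMu i z).2.2.2 hc (blt_down cs i z.1 hd)
            dsimp only at hr1
            rw [← hz'] at hr1
            have hblt2 : BruhatLT cs (cs.simple i * z'.1) z'.1 := by
              apply blt_down cs i z'.1
              rw [hsz', hlzs]
              omega
            have hr2 := (hMu i z').2.2.2 hnz' hblt2
            dsimp only at hr2
            rw [htw2] at hr2
            have hzz' : z' ≠ z := by
              intro e
              have he2 := hsz'
              rw [e] at he2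
              exact hc he2
            have h4 := hquadm i (aB z)
            rw [hr1, smul_add, hcommMu, hcommMu, hr1, hr2] at h4
            have hcoef := congrArg (fun m => aB.repr m z) h4
            simp only [map_add, map_sub, map_smul, Module.Basis.repr_self, Finsupp.smul_apply,
              Finsupp.add_apply, Finsupp.sub_apply, Finsupp.single_apply, eq_self_iff_true,
              if_true, if_neg hzz', smul_eq_mul, mul_zero, mul_one, add_zero, zero_add] at hcoef
            rw [hu] at hcoef
            apply X4_ne_X2
            linear_combination hcoef
          · -- good case: ℓ(s z s⋆) = ℓ(z) - 2
            have hlz' : cs.length z'.1 + 2 = cs.length z.1 := by omega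
            obtain ⟨h', hS', he'⟩ := ih (cs.length z'.1) (by omega) z' rfl
            have hblt3 : BruhatLT cs z'.1 (cs.simple i * z'.1) := by
              apply bruhat_lt_of_succ cs i z'.1
              rw [hsz', hlzs]
              omega
            have hr := (hMu i z').2.2.1 hnz' hblt3
            dsimp only at hr
            rw [htw2] at hr
            refine ⟨T (cs.simple i) * h', hTsS i h' hS', ?_⟩
            rw [← hr, map_smul, he', mul_smul]
  -- reverse: each T_w • Xe is in μ(M_{Apm})
  have hrev : ∀ (n : ℕ) (w : W), cs.length w = n → ∃ m ∈ SM, μ m = T w • Xe := by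
    intro n
    induction n using Nat.strong_induction_on with
    | _ n ih =>
      intro w hw
      by_cases h1 : w = 1
      · refine ⟨aB (oneI star), Submodule.subset_span ⟨_, rfl⟩, ?_⟩
        rw [hμone, h1, hH.1, one_smul]
      · obtain ⟨i, hi⟩ := cs.exists_leftDescent_of_ne_one h1
        have hd : cs.length (cs.simple i * w) + 1 = cs.length w := cs.isLeftDescent_iff.mp hi
        obtain ⟨m', hm', he'⟩ := ih (cs.length (cs.simple i * w)) (by omega) (cs.simple i * w) rfl
        have hTw : T (cs.simple i) * T (cs.simple i * w) = T w := by
          rw [hH.2.1 (cs.simple i) (cs.simple i * w)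
            (by rw [cs.length_simple, cs.simple_mul_simple_cancel_left i]; omega),
            cs.simple_mul_simple_cancel_left i]
        refine ⟨T (cs.simple i) • m', hTsSM i m' hm', ?_⟩
        rw [map_smul, he', ← mul_smul, hTw]
  -- conclusion
  constructor
  · exact fun x _ y _ h => hμinj h
  · ext ξ
    constructor
    · rintro ⟨m, hm, rfl⟩
      have hm' : m ∈ SM := hm
      clear hm
      have : ∃ h ∈ S, μ m = h • Xe := by
        induction hm' using Submodule.span_induction with
        | mem y hy =>
          obtain ⟨z, rfl⟩ := hy
          exact hfwd (cs.length z.1) z rfl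
        | zero => exact ⟨0, zero_mem S, by rw [map_zero, zero_smul]⟩
        | add y z _ _ hy hz =>
          obtain ⟨h1, h1S, he1⟩ := hy
          obtain ⟨h2, h2S, he2⟩ := hz
          exact ⟨h1 + h2, add_mem h1S h2S, by rw [map_add, he1, he2, add_smul]⟩
        | smul c y _ hy =>
          obtain ⟨h0, h0S, he0⟩ := hy
          refine ⟨(c : Fq) • h0, memS_smul _ c.2 _ h0S, ?_⟩
          have hcy : (c : ↥Apm) • y = (c : Fq) • y := rfl
          rw [hcy, hμFq, he0, smul_assoc]
      obtain ⟨h, hS', he⟩ := this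
      exact ⟨h, hS', he⟩
    · rintro ⟨h, hh, rfl⟩
      have hh' : h ∈ S := hh
      clear hh
      have : ∃ m ∈ SM, μ m = h • Xe := by
        induction hh' using Submodule.span_induction with
        | mem y hy =>
          obtain ⟨w, rfl⟩ := hy
          exact hrev (cs.length w) w rfl
        | zero => exact ⟨0, zero_mem SM, by rw [map_zero, zero_smul]⟩
        | add y z _ _ hy hz =>
          obtain ⟨m1, m1S, he1⟩ := hy
          obtain ⟨m2, m2S, he2⟩ := hz
          exact ⟨m1 + m2, add_mem m1S m2S, by rw [map_add, he1, he2, add_smul]⟩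
        | smul c y _ hy =>
          obtain ⟨m0, m0S, he0⟩ := hy
          refine ⟨(c : Fq) • m0, memSM_smul _ c.2 _ m0S, ?_⟩
          have hcy : (c : ↥Apm) • y = (c : Fq) • y := rfl
          rw [hcy, hμFq, he0, smul_assoc]
      obtain ⟨m, hmS, he⟩ := this
      exact ⟨m, hmS, he⟩


end IUIM
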